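/- Let α ≥ 3 and let T be the tree obtained from the path v_1 v_2 … v_α by attaching exactly three leaves ℓ_α, ℓ'_α, ℓ''_α to v_α and exactly two leaves ℓ_i, ℓ'_i to v_i for each i ∈ {1, …, α−1}. Let k ≥ 2 be an integer and let Z be any set consisting of exactly one vertex from each pair {ℓ_i, ℓ'_i}, i ∈ {1, …, α} (so |Z| = α). Then Z is not a distance-k resolving set of T, Z ∪ {ℓ''_α} is a distance-k resolving set of T, and dim_k(T) = α + 1. -/

import Mathlib

/-- The `k`-truncated distance: `d_k(x,y) = min{d(x,y), k+1}`. -/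
noncomputable def SimpleGraph.distK {V : Type*} (G : SimpleGraph V) (k : ℕ) (x y : V) : ℕ :=
  min (G.dist x y) (k + 1)

/-- `S` is a distance-`k` resolving set of `G`: every pair of distinct vertices is
resolved by some vertex of `S` with respect to the `k`-truncated distance. -/
def SimpleGraph.IsDistKResolvingSet {V : Type*} (G : SimpleGraph V) (k : ℕ) (S : Set V) : Prop :=
  ∀ x y : V, x ≠ y → ∃ z ∈ S, G.distK k x z ≠ G.distK k y z

/-- The distance-`k` metric dimension of `G`. -/
noncomputable def SimpleGraph.distKDim {V : Type*} (G : SimpleGraph V) (k : ℕ) : ℕ :=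
  sInf {m : ℕ | ∃ S : Set V, S.ncard = m ∧ G.IsDistKResolvingSet k S}

/-- `S` is a resolving set of `G`. -/
def SimpleGraph.IsResolvingSet {V : Type*} (G : SimpleGraph V) (S : Set V) : Prop :=
  ∀ x y : V, x ≠ y → ∃ z ∈ S, G.dist x z ≠ G.dist y z

/-- The metric dimension of `G`. -/
noncomputable def SimpleGraph.metricDim {V : Type*} (G : SimpleGraph V) : ℕ :=
  sInf {m : ℕ | ∃ S : Set V, S.ncard = m ∧ G.IsResolvingSet S}

/-- Vertices of the tree obtained from the path `v_1 v_2 … v_α` by attaching three leaves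
`ℓ_α, ℓ'_α, ℓ''_α` to `v_α` and two leaves `ℓ_i, ℓ'_i` to each `v_i`, `i ∈ [α-1]`
(`v_{i+1} = v i`, `ℓ_{i+1} = leaf i`, `ℓ'_{i+1} = leaf' i` for `i : Fin α`, and
`ℓ''_α = leaf''`). -/
inductive CatV3 (α : ℕ) : Type where
  | v : Fin α → CatV3 α
  | leaf : Fin α → CatV3 α
  | leaf' : Fin α → CatV3 α
  | leaf'' : CatV3 α

/-- Edges: `v_i v_{i+1}`, `v_i ℓ_i`, `v_i ℓ'_i`, and `v_α ℓ''_α`. -/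
def cat3Adj (α : ℕ) : CatV3 α → CatV3 α → Prop
  | .v i, .v j => j.val = i.val + 1
  | .v i, .leaf j => i = j
  | .v i, .leaf' j => i = j
  | .v i, .leaf'' => i.val = α - 1
  | _, _ => False

def cat3G (α : ℕ) : SimpleGraph (CatV3 α) := SimpleGraph.fromRel (cat3Adj α)

namespace Cat3Aux
open CatV3
variable {α : ℕ}

/-- Position along the spine. -/
def pos : CatV3 α → ℕ
  | .v i => i.val
  | .leaf i => i.val
  | .leaf' i => i.val
  | .leaf'' => α - 1

/-- Depth: `0` for spine vertices, `1` for leaves. -/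
def dep : CatV3 α → ℕ
  | .v _ => 0
  | .leaf _ => 1
  | .leaf' _ => 1
  | .leaf'' => 1

open Classical in
/-- The (claimed) distance function on the tree. -/
noncomputable def D (x y : CatV3 α) : ℕ :=
  if x = y then 0 else Nat.dist (pos x) (pos y) + dep x + dep y

lemma adj_iff {x y : CatV3 α} :
    (cat3G α).Adj x y ↔ x ≠ y ∧ (cat3Adj α x y ∨ cat3Adj α y x) := by
  simp [cat3G, SimpleGraph.fromRel_adj]

lemma pos_lt (hα : 0 < α) (x : CatV3 α) : pos x < α := by
  cases x <;> simp [pos] <;> omega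

lemma dep_le_one (x : CatV3 α) : dep x ≤ 1 := by cases x <;> simp [dep]

lemma eq_of_dep_zero {x y : CatV3 α} (hp : pos x = pos y) (hx : dep x = 0)
    (hy : dep y = 0) : x = y := by
  cases x <;> cases y <;> simp_all [dep, pos, Fin.ext_iff]

lemma D_one_of_adj {x y : CatV3 α} (h : (cat3G α).Adj x y) : D x y = 1 := by
  rw [adj_iff] at h
  obtain ⟨hne, h | h⟩ := h <;> cases x <;> cases y <;>
    simp_all [cat3Adj, D, pos, dep, Nat.dist] <;> omega

lemma D_lip {x x' : CatV3 α} (h : (cat3G α).Adj x x') (y : CatV3 α) :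
    D x y ≤ D x' y + 1 := by
  by_cases hxy : x = y
  · simp [D, hxy]
  by_cases hx'y : x' = y
  · subst hx'y; rw [D_one_of_adj h]; simp [D]
  rw [adj_iff] at h
  obtain ⟨hne, h | h⟩ := h <;> cases x <;> cases x' <;>
    simp_all [cat3Adj, D, hxy, hx'y, pos, dep, Nat.dist] <;> omega

lemma D_le_walk {x y : CatV3 α} (p : (cat3G α).Walk x y) : D x y ≤ p.length := by
  induction p with
  | nil => simp [D]
  | cons h p ih =>
    rw [SimpleGraph.Walk.length_cons]
    exact le_trans (D_lip h _) (by omega)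

lemma walk_chain : ∀ (n : ℕ) (i j : Fin α), j.val = i.val + n →
    ∃ p : (cat3G α).Walk (v i) (v j), p.length = n := by
  intro n
  induction n with
  | zero =>
    intro i j h
    have : i = j := Fin.ext (by omega)
    subst this
    exact ⟨.nil, rfl⟩
  | succ m ih =>
    intro i j h
    have hi1 : i.val + 1 < α := by omega
    have hadj : (cat3G α).Adj (v i) (v ⟨i.val + 1, hi1⟩) := by
      rw [adj_iff]
      refine ⟨by simp [Fin.ext_iff], Or.inl ?_⟩
      simp [cat3Adj]
    obtain ⟨p, hp⟩ := ih ⟨i.val + 1, hi1⟩ j (by simp; omega)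
    exact ⟨.cons hadj p, by simp [hp]⟩

def base (hα : 0 < α) : CatV3 α → Fin α
  | .v i => i
  | .leaf i => i
  | .leaf' i => i
  | .leaf'' => ⟨α - 1, by omega⟩

lemma base_val (hα : 0 < α) (x : CatV3 α) : (base hα x).val = pos x := by
  cases x <;> rfl

lemma walk_to_base (hα : 0 < α) (x : CatV3 α) :
    ∃ p : (cat3G α).Walk x (v (base hα x)), p.length = dep x := by
  cases x with
  | v i => exact ⟨.nil, rfl⟩
  | leaf i =>
    have h : (cat3G α).Adj (leaf i) (v (base hα (leaf i))) := by
      rw [adj_iff]; exact ⟨by simp, Or.inr (by simp [cat3Adj, base])⟩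
    exact ⟨.cons h .nil, rfl⟩
  | leaf' i =>
    have h : (cat3G α).Adj (leaf' i) (v (base hα (leaf' i))) := by
      rw [adj_iff]; exact ⟨by simp, Or.inr (by simp [cat3Adj, base])⟩
    exact ⟨.cons h .nil, rfl⟩
  | leaf'' =>
    have h : (cat3G α).Adj (leaf'' : CatV3 α) (v (base hα leaf'')) := by
      rw [adj_iff]; exact ⟨by simp, Or.inr (by simp [cat3Adj, base])⟩
    exact ⟨.cons h .nil, rfl⟩

lemma walk_v_v (hα : 0 < α) (i j : Fin α) :
    ∃ p : (cat3G α).Walk (v i) (v j), p.length = Nat.dist i.val j.val := by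
  rcases le_total i.val j.val with h | h
  · obtain ⟨p, hp⟩ := walk_chain (j.val - i.val) i j (by omega)
    exact ⟨p, by rw [hp, Nat.dist]; omega⟩
  · obtain ⟨p, hp⟩ := walk_chain (i.val - j.val) j i (by omega)
    exact ⟨p.reverse, by rw [SimpleGraph.Walk.length_reverse, hp, Nat.dist]; omega⟩

lemma exists_walk_D (hα : 0 < α) (x y : CatV3 α) :
    ∃ p : (cat3G α).Walk x y, p.length = Nat.dist (pos x) (pos y) + dep x + dep y := by
  obtain ⟨p1, h1⟩ := walk_to_base hα x
  obtain ⟨p2, h2⟩ := walk_v_v hα (base hα x) (base hα y)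
  obtain ⟨p3, h3⟩ := walk_to_base hα y
  refine ⟨(p1.append p2).append p3.reverse, ?_⟩
  simp [SimpleGraph.Walk.length_append, h1, h2, h3, base_val]
  omega

lemma dist_eq (hα : 0 < α) (x y : CatV3 α) : (cat3G α).dist x y = D x y := by
  obtain ⟨p, hp⟩ := exists_walk_D hα x y
  refine le_antisymm ?_ ?_
  · by_cases h : x = y
    · simp [h, D]
    · calc (cat3G α).dist x y ≤ p.length := SimpleGraph.dist_le p
        _ = D x y := by rw [hp, D, if_neg h]
  · obtain ⟨q, hq⟩ := SimpleGraph.Reachable.exists_walk_length_eq_dist ⟨p⟩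
    rw [← hq]; exact D_le_walk q

lemma distK_self (hα : 0 < α) (k : ℕ) (x : CatV3 α) : (cat3G α).distK k x x = 0 := by
  rw [SimpleGraph.distK, dist_eq hα, D, if_pos rfl]; simp

lemma distK_val (hα : 0 < α) (k : ℕ) {x z : CatV3 α} (hxz : x ≠ z) :
    (cat3G α).distK k x z = min (Nat.dist (pos x) (pos z) + dep x + dep z) (k + 1) := by
  rw [SimpleGraph.distK, dist_eq hα, D, if_neg hxz]

/-- Twin leaves are not resolved by any third vertex. -/
lemma twin (hα : 0 < α) (k : ℕ) {u w z : CatV3 α} (hp : pos u = pos w)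
    (du : dep u = 1) (dw : dep w = 1) (hzu : z ≠ u) (hzw : z ≠ w) :
    (cat3G α).distK k u z = (cat3G α).distK k w z := by
  rw [distK_val hα k (Ne.symm hzu), distK_val hα k (Ne.symm hzw), hp, du, dw]

lemma triple {zf : Fin α → CatV3 α}
    (hzf : ∀ i, zf i = CatV3.leaf i ∨ zf i = CatV3.leaf' i)
    (i : Fin α) {u w : CatV3 α} (hu : pos u = i.val) (hw : pos w = i.val)
    (du : dep u = 1) (dw : dep w = 1) (huw : u ≠ w)
    (hu' : u ≠ zf i) (hw' : w ≠ zf i) : u = CatV3.leaf'' ∨ w = CatV3.leaf'' := by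
  rcases hzf i with h | h <;> cases u <;> cases w <;>
    simp_all [pos, dep, Fin.ext_iff] <;> omega

/-- The key resolving lemma. -/
lemma resolve_aux (hα : 3 ≤ α) {k : ℕ} (hk : 2 ≤ k) {zf : Fin α → CatV3 α}
    (hzf : ∀ i, zf i = CatV3.leaf i ∨ zf i = CatV3.leaf' i)
    {x y : CatV3 α} (hxy : x ≠ y) (hpos : pos x ≤ pos y) :
    ∃ z, (z ∈ Set.range zf ∨ z = CatV3.leaf'') ∧
      (cat3G α).distK k x z ≠ (cat3G α).distK k y z := by
  have h0 : 0 < α := by omega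
  have pzf : ∀ i : Fin α, pos (zf i) = i.val := by
    intro i; rcases hzf i with h | h <;> rw [h] <;> rfl
  have dzf : ∀ i : Fin α, dep (zf i) = 1 := by
    intro i; rcases hzf i with h | h <;> rw [h] <;> rfl
  set i : Fin α := ⟨pos x, pos_lt h0 x⟩ with hidef
  set j : Fin α := ⟨pos y, pos_lt h0 y⟩ with hjdef
  have hix : (i : Fin α).val = pos x := rfl
  have hjy : (j : Fin α).val = pos y := rfl
  rcases eq_or_lt_of_le hpos with heq | hlt
  · -- same position
    by_cases hx : x = zf i
    · refine ⟨zf i, Or.inl ⟨i, rfl⟩, ?_⟩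
      have hy : y ≠ zf i := fun h => hxy (hx.trans h.symm)
      rw [hx, distK_self h0, distK_val h0 k hy]
      have := dep_le_one y
      rw [dzf]
      omega
    by_cases hy : y = zf i
    · refine ⟨zf i, Or.inl ⟨i, rfl⟩, ?_⟩
      rw [hy, distK_self h0, distK_val h0 k hx]
      have := dep_le_one x
      rw [dzf]
      omega
    by_cases hd : dep x = dep y
    · rcases Nat.le_one_iff_eq_zero_or_eq_one.mp (dep_le_one x) with d0 | d1
      · exact absurd (eq_of_dep_zero heq d0 (hd ▸ d0)) hxy
      · have hyi : pos y = i.val := heq.symm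
        rcases triple hzf i rfl hyi d1 (hd ▸ d1) hxy hx hy with hL | hL
        · refine ⟨CatV3.leaf'', Or.inr rfl, ?_⟩
          have hyne : y ≠ CatV3.leaf'' := fun h => hxy (hL.trans h.symm)
          rw [hL, distK_self h0, distK_val h0 k hyne]
          have := dep_le_one y
          simp only [dep]
          omega
        · refine ⟨CatV3.leaf'', Or.inr rfl, ?_⟩
          have hxne : x ≠ CatV3.leaf'' := fun h => hxy (h.trans hL.symm)
          rw [hL, distK_self h0, distK_val h0 k hxne]
          have := dep_le_one x
          simp only [dep]
          omega
    · refine ⟨zf i, Or.inl ⟨i, rfl⟩, ?_⟩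
      rw [distK_val h0 k hx, distK_val h0 k hy, pzf, dzf, hix]
      have hdx := dep_le_one x
      have hdy := dep_le_one y
      have e1 : Nat.dist (pos x) (pos x) = 0 := Nat.dist_self _
      rw [← heq] at *
      simp [Nat.dist] at *
      omega
  · -- pos x < pos y
    have hyzi : y ≠ zf i := by
      intro h; rw [h] at hlt; rw [pzf, hix] at hlt; omega
    by_cases hx : x = zf i
    · refine ⟨zf i, Or.inl ⟨i, rfl⟩, ?_⟩
      rw [hx, distK_self h0, distK_val h0 k hyzi]
      have := dep_le_one y
      rw [dzf]
      omega
    by_cases hEq : (cat3G α).distK k x (zf i) = (cat3G α).distK k y (zf i)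
    · -- forced shape: dep x = 1, y = spine at pos x + 1
      rw [distK_val h0 k hx, distK_val h0 k hyzi, pzf, dzf, hix] at hEq
      have hdx := dep_le_one x
      have hdy := dep_le_one y
      have hxx : Nat.dist (pos x) (pos x) = 0 := Nat.dist_self _
      have hdist : Nat.dist (pos y) (pos x) = pos y - pos x := by
        simp [Nat.dist]; omega
      rw [hxx, hdist] at hEq
      have hshape : dep x = 1 ∧ dep y = 0 ∧ pos y = pos x + 1 := by omega
      have hyzj : y ≠ zf j := by
        intro h; rw [h, dzf] at hshape; omega
      have hxzj : x ≠ zf j := by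
        intro h; rw [h, pzf, hjy] at hshape; omega
      refine ⟨zf j, Or.inl ⟨j, rfl⟩, ?_⟩
      rw [distK_val h0 k hxzj, distK_val h0 k hyzj, pzf, dzf, hjy]
      have hy0 : Nat.dist (pos y) (pos y) = 0 := Nat.dist_self _
      have hx1 : Nat.dist (pos x) (pos y) = 1 := by
        simp [Nat.dist]; omega
      rw [hy0, hx1]
      omega
    · exact ⟨zf i, Or.inl ⟨i, rfl⟩, hEq⟩

instance : Finite (CatV3 α) := by
  have hinj : Function.Injective (fun x : CatV3 α => (match x with
    | .v i => Sum.inl i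
    | .leaf i => Sum.inr (Sum.inl i)
    | .leaf' i => Sum.inr (Sum.inr (Sum.inl i))
    | .leaf'' => Sum.inr (Sum.inr (Sum.inr ())) :
      Fin α ⊕ Fin α ⊕ Fin α ⊕ Unit)) := by
    intro x y h
    cases x <;> cases y <;> simp_all
  exact Finite.of_injective _ hinj

lemma lower_bound (hα : 3 ≤ α) (k : ℕ) {S : Set (CatV3 α)}
    (hS : (cat3G α).IsDistKResolvingSet k S) : α + 1 ≤ S.ncard := by
  classical
  have h0 : 0 < α := by omega
  have hlt : α - 1 < α := by omega
  have hpairS : ∀ (u w : CatV3 α), dep u = 1 → dep w = 1 → pos u = pos w → u ≠ w →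
      u ∈ S ∨ w ∈ S := by
    intro u w du dw hp huw
    obtain ⟨z, hzS, hzne⟩ := hS u w huw
    by_contra hc
    push_neg at hc
    have hzu : z ≠ u := fun h => hc.1 (h ▸ hzS)
    have hzw : z ≠ w := fun h => hc.2 (h ▸ hzS)
    exact hzne (twin h0 k hp du dw hzu hzw)
  set l : Fin α := ⟨α - 1, hlt⟩ with hl
  set a : Fin α → CatV3 α :=
    fun i => if CatV3.leaf i ∈ S then CatV3.leaf i else CatV3.leaf' i with ha
  have hav : ∀ i, a i = CatV3.leaf i ∨ a i = CatV3.leaf' i := by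
    intro i; by_cases h : CatV3.leaf i ∈ S <;> simp [ha, h]
  have hapos : ∀ i, pos (a i) = i.val := by
    intro i; rcases hav i with h | h <;> rw [h] <;> rfl
  have haS : ∀ i, a i ∈ S := by
    intro i
    by_cases hi : CatV3.leaf i ∈ S
    · simpa [ha, hi] using hi
    · rcases hpairS (CatV3.leaf i) (CatV3.leaf' i) rfl rfl rfl
        (fun h => nomatch h) with h | h
      · exact absurd h hi
      · simpa [ha, hi] using h
  have hb : ∃ b ∈ S, pos b = α - 1 ∧ b ≠ a l := by
    by_cases hll : CatV3.leaf l ∈ S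
    · have hal : a l = CatV3.leaf l := by simp [ha, hll]
      have hp1 : pos (CatV3.leaf' l) = pos (CatV3.leaf'' : CatV3 α) := by
        show l.val = α - 1
        rw [hl]
      rcases hpairS (CatV3.leaf' l) CatV3.leaf'' rfl rfl hp1
        (fun h => nomatch h) with h | h
      · exact ⟨_, h, by rw [hl] at hp1 ⊢; exact hp1, by
          rw [hal]; exact fun hq => nomatch hq⟩
      · exact ⟨_, h, rfl, by rw [hal]; exact fun hq => nomatch hq⟩
    · have hal : a l = CatV3.leaf' l := by simp [ha, hll]
      have hp1 : pos (CatV3.leaf l) = pos (CatV3.leaf'' : CatV3 α) := by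
        show l.val = α - 1
        rw [hl]
      rcases hpairS (CatV3.leaf l) CatV3.leaf'' rfl rfl hp1
        (fun h => nomatch h) with h | h
      · exact absurd h hll
      · exact ⟨_, h, rfl, by rw [hal]; exact fun hq => nomatch hq⟩
  obtain ⟨b, hbS, hbpos, hbal⟩ := hb
  have hainj : Function.Injective a := by
    intro i1 i2 h12
    have : pos (a i1) = pos (a i2) := by rw [h12]
    rw [hapos, hapos] at this
    exact Fin.ext this
  have hbra : b ∉ Set.range a := by
    rintro ⟨i', rfl⟩
    have : i' = l := by
      apply Fin.ext
      rw [← hapos i', hbpos, hl]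
    exact hbal (by rw [this])
  have hsub : insert b (Set.range a) ⊆ S := by
    intro t ht
    rcases ht with rfl | ⟨i', rfl⟩
    · exact hbS
    · exact haS i'
  calc α + 1 = (insert b (Set.range a)).ncard := by
        rw [Set.ncard_insert_of_notMem hbra (Set.toFinite _),
          ← Set.image_univ, Set.ncard_image_of_injective _ hainj, Set.ncard_univ]
        simp
    _ ≤ S.ncard := Set.ncard_le_ncard hsub (Set.toFinite S)

end Cat3Aux

open Cat3Aux

/-- for this tree `T` with `α ≥ 3` and `k ≥ 2`, if `Z` consists of exactly
one vertex from each pair `{ℓ_i, ℓ'_i}` (so `|Z| = α`), then `Z` is not a distance-k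
resolving set, `Z ∪ {ℓ''_α}` is a distance-k resolving set, and `dim_k(T) = α + 1`. -/
theorem stmt_13 (α : ℕ) (hα : 3 ≤ α) (k : ℕ) (hk : 2 ≤ k) (Z : Set (CatV3 α))
    (hpair : ∀ i : Fin α,
      (CatV3.leaf i ∈ Z ∧ CatV3.leaf' i ∉ Z) ∨ (CatV3.leaf' i ∈ Z ∧ CatV3.leaf i ∉ Z))
    (honly : ∀ w ∈ Z, ∃ i : Fin α, w = CatV3.leaf i ∨ w = CatV3.leaf' i) :
    ¬ (cat3G α).IsDistKResolvingSet k Z ∧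
      (cat3G α).IsDistKResolvingSet k (Z ∪ {CatV3.leaf''}) ∧
      (cat3G α).distKDim k = α + 1 := by
  classical
  have h0 : 0 < α := by omega
  have hlt : α - 1 < α := by omega
  set zf : Fin α → CatV3 α :=
    fun i => if CatV3.leaf i ∈ Z then CatV3.leaf i else CatV3.leaf' i with hzfdef
  have hzf : ∀ i, zf i = CatV3.leaf i ∨ zf i = CatV3.leaf' i := by
    intro i; by_cases h : CatV3.leaf i ∈ Z <;> simp [hzfdef, h]
  have hzfZ : ∀ i, zf i ∈ Z := by
    intro i
    rcases hpair i with ⟨h1, h2⟩ | ⟨h1, h2⟩ <;> simp [hzfdef, h1, h2]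
  have hZr : Z = Set.range zf := by
    apply Set.Subset.antisymm
    · intro w hw
      obtain ⟨i, hi | hi⟩ := honly w hw
      · rcases hpair i with ⟨h1, h2⟩ | ⟨h1, h2⟩
        · exact ⟨i, by simp only [hzfdef]; rw [if_pos h1]; exact hi.symm⟩
        · exact absurd (hi ▸ hw) h2
      · rcases hpair i with ⟨h1, h2⟩ | ⟨h1, h2⟩
        · exact absurd (hi ▸ hw) h2
        · exact ⟨i, by simp only [hzfdef]; rw [if_neg h2]; exact hi.symm⟩
    · rintro w ⟨i, rfl⟩; exact hzfZ i
  have hnotinZ : CatV3.leaf'' ∉ Z := by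
    intro h
    obtain ⟨i, hi | hi⟩ := honly _ h <;> exact nomatch hi
  have hres : (cat3G α).IsDistKResolvingSet k (Z ∪ {CatV3.leaf''}) := by
    intro x y hxy
    have conv : ∀ z : CatV3 α, (z ∈ Set.range zf ∨ z = CatV3.leaf'') →
        z ∈ Z ∪ {CatV3.leaf''} := by
      rintro z (hz | rfl)
      · exact Or.inl (by rw [hZr]; exact hz)
      · exact Or.inr rfl
    rcases le_total (pos x) (pos y) with h | h
    · obtain ⟨z, hz, hne⟩ := resolve_aux hα hk hzf hxy h
      exact ⟨z, conv z hz, hne⟩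
    · obtain ⟨z, hz, hne⟩ := resolve_aux hα hk hzf (Ne.symm hxy) h
      exact ⟨z, conv z hz, fun hq => hne hq.symm⟩
  refine ⟨?_, hres, ?_⟩
  · intro hcon
    obtain ⟨w, hwpos, hwdep, hwZ, hwne''⟩ :
        ∃ w : CatV3 α, pos w = α - 1 ∧ dep w = 1 ∧ w ∉ Z ∧ w ≠ CatV3.leaf'' := by
      rcases hpair ⟨α - 1, hlt⟩ with ⟨h1, h2⟩ | ⟨h1, h2⟩
      · exact ⟨CatV3.leaf' ⟨α - 1, hlt⟩, rfl, rfl, h2, fun h => nomatch h⟩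
      · exact ⟨CatV3.leaf ⟨α - 1, hlt⟩, rfl, rfl, h2, fun h => nomatch h⟩
    obtain ⟨z, hzZ, hzne⟩ := hcon w CatV3.leaf'' hwne''
    have hzw : z ≠ w := fun h => hwZ (h ▸ hzZ)
    have hz'' : z ≠ CatV3.leaf'' := fun h => hnotinZ (h ▸ hzZ)
    exact hzne (twin h0 k (by rw [hwpos]; rfl) hwdep rfl hzw hz'')
  · have hinjzf : Function.Injective zf := by
      intro i1 i2 h
      have p1 : pos (zf i1) = i1.val := by
        rcases hzf i1 with hh | hh <;> rw [hh] <;> rfl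
      have p2 : pos (zf i2) = i2.val := by
        rcases hzf i2 with hh | hh <;> rw [hh] <;> rfl
      exact Fin.ext (by rw [← p1, ← p2, h])
    have hcard : (Z ∪ {CatV3.leaf''}).ncard = α + 1 := by
      rw [Set.union_singleton, Set.ncard_insert_of_notMem hnotinZ (Set.toFinite _), hZr,
        ← Set.image_univ, Set.ncard_image_of_injective _ hinjzf, Set.ncard_univ]
      simp
    have hmem : α + 1 ∈ {m : ℕ | ∃ S : Set (CatV3 α),
        S.ncard = m ∧ (cat3G α).IsDistKResolvingSet k S} :=
      ⟨Z ∪ {CatV3.leaf''}, hcard, hres⟩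
    refine le_antisymm (Nat.sInf_le hmem) ?_
    obtain ⟨S, hSc, hSr⟩ := Nat.sInf_mem (⟨α + 1, hmem⟩ : Set.Nonempty _)
    calc α + 1 ≤ S.ncard := lower_bound hα k hSr
      _ = (cat3G α).distKDim k := hSc
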